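/- There is no countable K(ω)-free graph that weakly embeds every countable K(ω)-free graph. More precisely: if X = (V, E) is a graph on a countable vertex set V containing no infinite clique, then there exists a countable graph X' with no infinite clique that admits no injective edge-preserving map into X. -/

import Mathlib

open Cardinal
open scoped Classical

section Aux

variable {α : Type} (G : SimpleGraph α)

/-- The type of finite cliques of a graph. -/
def CV : Type := {s : Finset α // G.IsClique (s : Set α)}

/-- The extension relation on finite cliques: `cliqueRel t s` iff `t` properly extends `s`. -/
def cliqueRel : CV G → CV G → Prop := fun t s => s.1 ⊂ t.1

/-- An infinite chain (w.r.t. `⊆`) of finite cliques yields an infinite clique. -/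
lemma chain_union (hX : ¬ ∃ s : Set α, G.IsClique s ∧ s.Infinite)
    (C : Set (Finset α)) (hcl : ∀ s ∈ C, G.IsClique (s : Set α))
    (hchain : ∀ s ∈ C, ∀ t ∈ C, s ⊆ t ∨ t ⊆ s) (hC : C.Infinite) : False := by
  set U : Set α := ⋃ s ∈ C, (s : Set α) with hU
  have hUclique : G.IsClique U := by
    intro x hx y hy hxy
    simp only [hU, Set.mem_iUnion] at hx hy
    obtain ⟨s, hs, hxs⟩ := hx
    obtain ⟨t, ht, hyt⟩ := hy
    rcases hchain s hs t ht with h | h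
    · exact hcl t ht (h hxs) hyt hxy
    · exact hcl s hs hxs (h hyt) hxy
  have hUinf : U.Infinite := by
    by_contra hfin
    rw [Set.not_infinite] at hfin
    have : C ⊆ ↑(Set.Finite.toFinset hfin).powerset := by
      intro s hs
      rw [Finset.mem_coe, Finset.mem_powerset]
      intro x hx
      rw [Set.Finite.mem_toFinset]
      exact Set.mem_biUnion hs hx
    exact hC (Set.Finite.subset (Finset.finite_toSet _) this)
  exact hX ⟨U, hUclique, hUinf⟩

/-- If `G` has no infinite clique then the clique extension relation is well-founded. -/
lemma cliqueRel_wf (hX : ¬ ∃ s : Set α, G.IsClique s ∧ s.Infinite) :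
    WellFounded (cliqueRel G) := by
  haveI : IsIrrefl (CV G) (cliqueRel G) := ⟨fun a h => ssubset_irrefl a.1 h⟩
  haveI : IsTrans (CV G) (cliqueRel G) := ⟨fun _ _ _ h1 h2 => h2.trans h1⟩
  haveI : IsStrictOrder (CV G) (cliqueRel G) := { }
  by_contra hw
  rw [RelEmbedding.wellFounded_iff_isEmpty, not_isEmpty_iff] at hw
  obtain ⟨f⟩ := hw
  have hsucc : ∀ n : ℕ, (f n).1 ⊂ (f (n + 1)).1 :=
    fun n => f.map_rel_iff.2 (Nat.lt_succ_self n)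
  have hmono : Monotone fun n => (f n).1 :=
    monotone_nat_of_le_succ fun n => (hsucc n).subset
  refine chain_union G hX (Set.range fun n => (f n).1) ?_ ?_ ?_
  · rintro s ⟨n, rfl⟩; exact (f n).2
  · rintro s ⟨m, rfl⟩ t ⟨n, rfl⟩
    rcases le_total m n with h | h
    · exact Or.inl (hmono h)
    · exact Or.inr (hmono h)
  · apply Set.infinite_range_of_injective
    intro m n hmn
    by_contra hne
    rcases Ne.lt_or_gt hne with h | h
    · exact (hmono (Nat.succ_le_of_lt h)).not_gt (by simpa [hmn] using hsucc m)
    · exact (hmono (Nat.succ_le_of_lt h)).not_gt (by simpa [hmn.symm] using hsucc n)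

/-- The rank of a finite clique in the well-founded extension relation. -/
noncomputable def crank (hw : WellFounded (cliqueRel G)) (s : CV G) : Ordinal :=
  (hw.apply s).rank

lemma crank_eq (hw : WellFounded (cliqueRel G)) (s : CV G) :
    crank G hw s = ⨆ t : {t // cliqueRel G t s}, Order.succ (crank G hw t.1) := by
  unfold crank
  rw [Acc.rank_eq]

lemma crank_lt (hw : WellFounded (cliqueRel G)) {t s : CV G} (h : cliqueRel G t s) :
    crank G hw t < crank G hw s := by
  unfold crank
  have := Acc.rank_lt_of_rel (hw.apply s) h
  rwa [show ((hw.apply s).inv h).rank = (hw.apply t).rank from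
    congrArg Acc.rank (Subsingleton.elim _ _)] at this

end Aux

section Emb

variable {α β : Type} {A : SimpleGraph α} {B : SimpleGraph β}

/-- Image of a clique under a weak embedding is a clique. -/
lemma clique_image {f : α → β} (hinj : Function.Injective f)
    (hpres : ∀ a b : α, A.Adj a b → B.Adj (f a) (f b))
    (s : Finset α) (hs : A.IsClique (s : Set α)) :
    B.IsClique ((s.image f : Finset β) : Set β) := by
  intro x hx y hy hxy
  simp only [Finset.coe_image, Set.mem_image, Finset.mem_coe] at hx hy
  obtain ⟨a, ha, rfl⟩ := hx
  obtain ⟨b, hb, rfl⟩ := hy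
  exact hpres a b (hs ha hb fun h => hxy (congrArg f h))

/-- The total clique rank is monotone under weak embeddings. -/
lemma rank_mono (hwA : WellFounded (cliqueRel A)) (hwB : WellFounded (cliqueRel B))
    {f : α → β} (hinj : Function.Injective f)
    (hpres : ∀ a b : α, A.Adj a b → B.Adj (f a) (f b)) :
    ∀ c : CV A, crank A hwA c ≤ crank B hwB ⟨c.1.image f, clique_image hinj hpres c.1 c.2⟩ := by
  intro c
  induction c using hwA.induction with
  | _ c IH =>
    rw [crank_eq]
    apply Ordinal.iSup_le
    rintro ⟨t, ht⟩
    have himg : cliqueRel B ⟨t.1.image f, clique_image hinj hpres t.1 t.2⟩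
        ⟨c.1.image f, clique_image hinj hpres c.1 c.2⟩ := by
      refine Finset.ssubset_iff_of_subset (Finset.image_subset_image ht.subset) |>.2 ?_
      obtain ⟨x, hxt, hxc⟩ := Finset.exists_of_ssubset ht
      refine ⟨f x, Finset.mem_image_of_mem f hxt, fun hmem => ?_⟩
      obtain ⟨y, hy, hyx⟩ := Finset.mem_image.1 hmem
      exact hxc (hinj hyx ▸ hy)
    have h1 : crank A hwA t ≤ crank B hwB ⟨t.1.image f, _⟩ := IH t ht
    have h2 := crank_lt B hwB himg
    exact Order.succ_le_of_lt (lt_of_le_of_lt h1 h2)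

end Emb

section Comp

variable {α : Type} (G : SimpleGraph α)

/-- The comparability graph of the poset of finite cliques of `G`. -/
def compGraph : SimpleGraph (CV G) where
  Adj a b := a ≠ b ∧ (a.1 ⊆ b.1 ∨ b.1 ⊆ a.1)
  symm := by constructor; rintro a b ⟨h1, h2⟩; exact ⟨h1.symm, h2.symm⟩
  loopless := by constructor; rintro a ⟨h1, _⟩; exact h1 rfl

/-- The comparability graph of the cliques of a `K(ω)`-free graph is `K(ω)`-free. -/
lemma compGraph_free (hX : ¬ ∃ s : Set α, G.IsClique s ∧ s.Infinite) :
    ¬ ∃ s : Set (CV G), (compGraph G).IsClique s ∧ s.Infinite := by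
  rintro ⟨S, hScl, hSinf⟩
  refine chain_union G hX ((fun a : CV G => a.1) '' S) ?_ ?_ ?_
  · rintro s ⟨a, _, rfl⟩; exact a.2
  · rintro s ⟨a, ha, rfl⟩ t ⟨b, hb, rfl⟩
    by_cases hab : a = b
    · exact Or.inl (hab ▸ subset_rfl)
    · exact (hScl ha hb hab).2
  · refine hSinf.image ?_
    intro a _ b _ h
    exact Subtype.ext h

/-- Key rank lower bound: the rank of a chain with top `s` in the comparability graph
is at least the rank of `s`. -/
lemma comp_rank_lower (hwX : WellFounded (cliqueRel G))
    (hwY : WellFounded (cliqueRel (compGraph G))) :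
    ∀ s : CV G, ∀ c : CV (compGraph G), s ∈ c.1 → (∀ a ∈ c.1, a.1 ⊆ s.1) →
      crank G hwX s ≤ crank (compGraph G) hwY c := by
  intro s
  induction s using hwX.induction with
  | _ s IH =>
    intro c hsc htop
    rw [crank_eq]
    apply Ordinal.iSup_le
    rintro ⟨t, ht⟩
    -- `ht : s.1 ⊂ t.1`
    have htnotc : t ∉ c.1 := fun hmem => (ht.not_subset) (htop t hmem)
    have hc' : (compGraph G).IsClique ((insert t c.1 : Finset (CV G)) : Set (CV G)) := by
      intro x hx y hy hxy
      simp only [Finset.coe_insert, Set.mem_insert_iff, Finset.mem_coe] at hx hy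
      rcases hx with rfl | hx
      · rcases hy with rfl | hy
        · exact absurd rfl hxy
        · exact ⟨hxy, Or.inr ((htop y hy).trans ht.subset)⟩
      · rcases hy with rfl | hy
        · exact ⟨hxy, Or.inl ((htop x hx).trans ht.subset)⟩
        · exact c.2 hx hy hxy
    have hrel : cliqueRel (compGraph G) ⟨insert t c.1, hc'⟩ c := Finset.ssubset_insert htnotc
    have h1 : crank G hwX t ≤ crank (compGraph G) hwY ⟨insert t c.1, hc'⟩ := by
      refine IH t ht ⟨insert t c.1, hc'⟩ (Finset.mem_insert_self t c.1) ?_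
      intro a ha
      rcases Finset.mem_insert.1 ha with rfl | ha
      · exact subset_rfl
      · exact (htop a ha).trans ht.subset
    exact Order.succ_le_of_lt (lt_of_le_of_lt h1 (crank_lt _ hwY hrel))

end Comp

/-- There is no countable `K(ω)`-free graph weakly embedding all countable
`K(ω)`-free graphs: for any graph `X` on a countable vertex set with no infinite
clique, there is a countable graph `Y` with no infinite clique admitting no
injective edge-preserving map into `X`. -/
theorem stmt0 (V : Type) [Countable V] (X : SimpleGraph V)
    (hX : ¬ ∃ s : Set V, X.IsClique s ∧ s.Infinite) :
    ∃ (W : Type) (_ : Countable W) (Y : SimpleGraph W),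
      (¬ ∃ s : Set W, Y.IsClique s ∧ s.Infinite) ∧
      ¬ ∃ f : W → V, Function.Injective f ∧
        ∀ a b : W, Y.Adj a b → X.Adj (f a) (f b) := by
  refine ⟨CV X, ?_, compGraph X, compGraph_free X hX, ?_⟩
  · exact (inferInstance : Countable {s : Finset V // X.IsClique (s : Set V)})
  rintro ⟨f, finj, fpres⟩
  have hwX : WellFounded (cliqueRel X) := cliqueRel_wf X hX
  have hwY : WellFounded (cliqueRel (compGraph X)) :=
    cliqueRel_wf (compGraph X) (compGraph_free X hX)
  -- the empty cliques
  have hXe : X.IsClique ((∅ : Finset V) : Set V) := by simp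
  have hYe : (compGraph X).IsClique ((∅ : Finset (CV X)) : Set (CV X)) := by simp
  set sX : CV X := ⟨∅, hXe⟩
  set cY : CV (compGraph X) := ⟨∅, hYe⟩
  -- upper bound from the weak embedding
  have hub : crank (compGraph X) hwY cY ≤ crank X hwX sX := by
    have := rank_mono hwY hwX finj fpres cY
    simpa [cY, sX] using this
  -- lower bound from `comp_rank_lower`
  have hsing : (compGraph X).IsClique (({sX} : Finset (CV X)) : Set (CV X)) := by
    simp
  have hlow : crank X hwX sX ≤ crank (compGraph X) hwY ⟨{sX}, hsing⟩ := by
    refine comp_rank_lower X hwX hwY sX ⟨{sX}, hsing⟩ (Finset.mem_singleton_self sX) ?_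
    intro a ha
    rw [Finset.mem_singleton] at ha
    exact ha ▸ subset_rfl
  have hstep : crank (compGraph X) hwY ⟨{sX}, hsing⟩ < crank (compGraph X) hwY cY :=
    crank_lt _ hwY (by simp [cliqueRel, cY])
  exact absurd ((hlow.trans_lt hstep).trans_le hub) (lt_irrefl _)
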